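/- Define g : ℝ² → ℝ by g(x₁,x₂) = 1/(1 + e^{−x₁}) + 1/(1 + e^{−x₂}) and let x* = (−10,−10). Then for every ε ∈ (0,1] and every x ∈ [−10,10]², g is (ε, 1, x*)-SLQC at x; that is, either g(x) − g(x*) ≤ ε, or ∇g(x) ≠ 0 and ⟨∇g(x), y − x⟩ ≤ 0 for every y in the closed ball of radius ε centered at x*. -/

import Mathlib

open RealInnerProductSpace

noncomputable def g13 (x : EuclideanSpace ℝ (Fin 2)) : ℝ :=
  1 / (1 + Real.exp (-(x 0))) + 1 / (1 + Real.exp (-(x 1)))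

noncomputable def xstar13 : EuclideanSpace ℝ (Fin 2) :=
  (WithLp.equiv 2 (Fin 2 → ℝ)).symm ![-10, -10]


noncomputable def sg13 (t : ℝ) : ℝ := 1 / (1 + Real.exp (-t))
noncomputable def sgd (t : ℝ) : ℝ := Real.exp (-t) / (1 + Real.exp (-t))^2

lemma sgd_pos (t : ℝ) : 0 < sgd t := by unfold sgd; positivity

lemma sg13_pos (t : ℝ) : 0 < sg13 t := by unfold sg13; positivity

lemma sg13_mono {a b : ℝ} (h : a ≤ b) : sg13 a ≤ sg13 b := by
  unfold sg13
  have h1 : (0:ℝ) < 1 + Real.exp (-b) := by positivity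
  have h2 : Real.exp (-b) ≤ Real.exp (-a) := Real.exp_le_exp.2 (by linarith)
  rw [div_le_div_iff₀ (by positivity) h1]
  linarith

lemma sg13_le_exp (t : ℝ) : sg13 t ≤ Real.exp t := by
  unfold sg13
  have h1 : (0:ℝ) < 1 + Real.exp (-t) := by positivity
  rw [div_le_iff₀ h1]
  have h2 : Real.exp t * Real.exp (-t) = 1 := by
    rw [← Real.exp_add]; simp
  nlinarith [Real.exp_pos t]

lemma sgd_le_exp (t : ℝ) : sgd t ≤ Real.exp t := by
  unfold sgd
  have h1 : (0:ℝ) < 1 + Real.exp (-t) := by positivity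
  rw [div_le_iff₀ (by positivity)]
  have h2 : Real.exp t * Real.exp (-t) = 1 := by rw [← Real.exp_add]; simp
  nlinarith [Real.exp_pos t, Real.exp_pos (-t)]

-- sg13 b - sg13 a ≤ exp b - exp a ≤ exp b * (b - a) for a ≤ b
lemma sg13_mvt {a b : ℝ} (h : a ≤ b) : sg13 b - sg13 a ≤ Real.exp b * (b - a) := by
  have hu : (0:ℝ) < Real.exp (-a) := Real.exp_pos _
  have hv : (0:ℝ) < Real.exp (-b) := Real.exp_pos _
  have hvu : Real.exp (-b) ≤ Real.exp (-a) := Real.exp_le_exp.2 (by linarith)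
  have hea : Real.exp a * Real.exp (-a) = 1 := by rw [← Real.exp_add]; simp
  have heb : Real.exp b * Real.exp (-b) = 1 := by rw [← Real.exp_add]; simp
  have step1 : sg13 b - sg13 a ≤ Real.exp b - Real.exp a := by
    unfold sg13
    rw [div_sub_div _ _ (by positivity) (by positivity)]
    rw [div_le_iff₀ (by positivity)]
    have hab : Real.exp a ≤ Real.exp b := Real.exp_le_exp.2 h
    nlinarith [Real.exp_pos a, Real.exp_pos b, mul_pos hu hv,
      mul_le_mul_of_nonneg_left hvu (le_of_lt (Real.exp_pos b))]
  have step2 : Real.exp b - Real.exp a ≤ Real.exp b * (b - a) := by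
    have h3 : (a - b) + 1 ≤ Real.exp (a - b) := Real.add_one_le_exp _
    have h4 : Real.exp (a - b) * Real.exp b = Real.exp a := by rw [← Real.exp_add]; ring_nf
    nlinarith [Real.exp_pos b]
  linarith

lemma sgd_sym (t : ℝ) : sgd t = Real.exp t / (1 + Real.exp t)^2 := by
  unfold sgd
  have h2 : Real.exp t * Real.exp (-t) = 1 := by rw [← Real.exp_add]; simp
  have h1 : (0:ℝ) < 1 + Real.exp (-t) := by positivity
  have h3 : (0:ℝ) < 1 + Real.exp t := by positivity
  field_simp
  nlinarith [Real.exp_pos t, Real.exp_pos (-t)]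

lemma exp9_bound : Real.exp (-9) ≤ 1/64 := by
  have h3 : (4:ℝ) ≤ Real.exp 3 := by nlinarith [Real.add_one_le_exp (3:ℝ)]
  have h9 : (64:ℝ) ≤ Real.exp 9 := by
    have : Real.exp 9 = Real.exp 3 * Real.exp 3 * Real.exp 3 := by
      rw [← Real.exp_add, ← Real.exp_add]; norm_num
    nlinarith [Real.exp_pos (3:ℝ)]
  rw [Real.exp_neg]
  rw [inv_le_comm₀ (by positivity) (by norm_num)]
  linarith

lemma exp_neg_one_lt : Real.exp (-1) < 0.368 := by
  have h := Real.exp_one_gt_d9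
  rw [Real.exp_neg]
  rw [inv_lt_comm₀ (Real.exp_pos 1) (by norm_num)]
  norm_num
  linarith

set_option maxHeartbeats 2000000 in
lemma core13 (ε a b u v : ℝ) (hε : 0 < ε) (hε1 : ε ≤ 1) (hab : b ≤ a)
    (ha : -10 ≤ a) (ha' : a ≤ 10) (hb : -10 ≤ b)
    (hbig : 2 * sg13 (-10) + ε < sg13 a + sg13 b)
    (hu : |u + 10| ≤ ε) (hv : |v + 10| ≤ ε) :
    sgd a * (u - a) + sgd b * (v - b) ≤ 0 := by
  have hsa : sg13 (-10) + ε/2 < sg13 a := by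
    have := sg13_mono hab; linarith
  have hu' : u ≤ -10 + ε := by have := (abs_le.mp hu).2; linarith
  have hv' : v ≤ -10 + ε := by have := (abs_le.mp hv).2; linarith
  by_cases hbe : -10 + ε ≤ b
  · have h1 : sgd a * (u - a) ≤ 0 :=
      mul_nonpos_of_nonneg_of_nonpos (sgd_pos a).le (by linarith)
    have h2 : sgd b * (v - b) ≤ 0 :=
      mul_nonpos_of_nonneg_of_nonpos (sgd_pos b).le (by linarith)
    linarith
  · push_neg at hbe
    have htb : sgd b * (v - b) ≤ Real.exp (-9) * ε := by
      have h1 : sgd b ≤ Real.exp b := sgd_le_exp b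
      have h2 : Real.exp b ≤ Real.exp (-9) := Real.exp_le_exp.2 (by linarith)
      have h3 : v - b ≤ ε := by linarith
      nlinarith [sgd_pos b, Real.exp_pos (-9)]
    have hta : Real.exp (-9) * ε ≤ sgd a * (a - u) := by
      have hau : a + 10 - ε ≤ a - u := by linarith
      have hc9 : Real.exp (-9) ≤ 1/64 := exp9_bound
      by_cases hcase : -1 ≤ a
      · -- sgd a ≥ exp(-10)/2
        have hw1 : Real.exp (-10) ≤ Real.exp (-a) := Real.exp_le_exp.2 (by linarith)
        have hw2 : Real.exp (-a) ≤ Real.exp 1 := Real.exp_le_exp.2 (by linarith)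
        have he1 : Real.exp 1 < 2.7182818286 := Real.exp_one_lt_d9
        have hc : Real.exp (-10) ≤ 1/64 :=
          le_trans (Real.exp_le_exp.2 (by norm_num)) exp9_bound
        have hclaim : Real.exp (-10) / 2 ≤ sgd a := by
          unfold sgd
          rw [le_div_iff₀ (by positivity)]
          nlinarith [Real.exp_pos (-a), Real.exp_pos (-10),
            mul_le_mul_of_nonneg_right hc (Real.exp_pos (-a)).le,
            mul_le_mul_of_nonneg_right
              (mul_le_mul_of_nonneg_right hc (Real.exp_pos (-a)).le)
              (Real.exp_pos (-a)).le,
            mul_le_mul_of_nonneg_right hw2 (Real.exp_pos (-a)).le]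
        have h8 : (8:ℝ) ≤ a + 10 - ε := by linarith
        have step : 4 * Real.exp (-10) ≤ sgd a * (a - u) := by
          nlinarith [Real.exp_pos (-10), sgd_pos a]
        have h9 : Real.exp (-9) = Real.exp 1 * Real.exp (-10) := by
          rw [← Real.exp_add]; norm_num
        nlinarith [mul_le_mul_of_nonneg_left hε1 (Real.exp_pos (-9)).le,
          mul_le_mul_of_nonneg_right he1.le (Real.exp_pos (-10)).le,
          Real.exp_pos (-10)]
      · push_neg at hcase
        have hea : Real.exp a < 0.368 :=
          lt_trans (Real.exp_lt_exp.2 (by linarith)) exp_neg_one_lt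
        have hεa : ε/2 < Real.exp a := by
          have h1 := sg13_le_exp a
          have h2 := sg13_pos (-10)
          linarith
        have hmvt : sg13 a - sg13 (-10) ≤ Real.exp a * (a + 10) := by
          have := sg13_mvt (show (-10:ℝ) ≤ a from ha)
          have h : a - (-10) = a + 10 := by ring
          rw [h] at this; linarith
        have hA : ε ≤ 2 * Real.exp a * (a + 10) := by nlinarith
        have hAnn : 0 ≤ a + 10 - ε := by nlinarith [Real.exp_pos a]
        have hM : 0 ≤ a - u := by linarith
        have hsgd : Real.exp a / 4 ≤ sgd a := by
          rw [sgd_sym, div_le_div_iff₀ (by norm_num) (by positivity)]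
          nlinarith [Real.exp_pos a, hea, mul_le_mul_of_nonneg_left hea.le (Real.exp_pos a).le,
            mul_le_mul_of_nonneg_left
              (mul_le_mul_of_nonneg_left hea.le (Real.exp_pos a).le) (Real.exp_pos a).le]
        have s1 : Real.exp a / 4 * (a - u) ≤ sgd a * (a - u) :=
          mul_le_mul_of_nonneg_right hsgd hM
        have s2 : Real.exp a / 4 * (a + 10 - ε) ≤ Real.exp a / 4 * (a - u) :=
          mul_le_mul_of_nonneg_left hau (by positivity)
        have s3 : Real.exp (-9) * ε ≤ Real.exp a / 4 * (a + 10 - ε) := by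
          nlinarith [mul_le_mul_of_nonneg_right hea.le hε.le,
            mul_le_mul_of_nonneg_right hc9 hε.le]
        linarith
    linarith




lemma sgd_hasDeriv (t : ℝ) : HasDerivAt (fun u => 1 / (1 + Real.exp (-u))) (sgd t) t := by
  have h1 : HasDerivAt (fun u : ℝ => 1 + Real.exp (-u)) (-Real.exp (-t)) t := by
    simpa using (HasDerivAt.const_add 1 (((hasDerivAt_id t).neg).exp))
  have hne : (1 + Real.exp (-t)) ≠ 0 := by positivity
  have h2 := (h1.inv hne : HasDerivAt (fun u => (1 + Real.exp (-u))⁻¹) _ t)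
  simp only [one_div]
  refine h2.congr_deriv ?_
  unfold sgd
  field_simp

lemma g13_hasGradient (x : EuclideanSpace ℝ (Fin 2)) :
    HasGradientAt g13 ((WithLp.equiv 2 (Fin 2 → ℝ)).symm ![sgd (x 0), sgd (x 1)]) x := by
  have hp0 : HasFDerivAt (fun y : EuclideanSpace ℝ (Fin 2) => y 0)
      (EuclideanSpace.proj (0 : Fin 2) : EuclideanSpace ℝ (Fin 2) →L[ℝ] ℝ) x :=
    by simpa using ((EuclideanSpace.proj (0 : Fin 2) : EuclideanSpace ℝ (Fin 2) →L[ℝ] ℝ).hasFDerivAt (x := x))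
  have hp1 : HasFDerivAt (fun y : EuclideanSpace ℝ (Fin 2) => y 1)
      (EuclideanSpace.proj (1 : Fin 2) : EuclideanSpace ℝ (Fin 2) →L[ℝ] ℝ) x :=
    by simpa using ((EuclideanSpace.proj (1 : Fin 2) : EuclideanSpace ℝ (Fin 2) →L[ℝ] ℝ).hasFDerivAt (x := x))
  have h0 : HasFDerivAt (fun y : EuclideanSpace ℝ (Fin 2) => 1 / (1 + Real.exp (-(y 0))))
      (sgd (x 0) • (EuclideanSpace.proj (0 : Fin 2) : EuclideanSpace ℝ (Fin 2) →L[ℝ] ℝ)) x :=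
    (sgd_hasDeriv (x 0)).comp_hasFDerivAt (f := fun y : EuclideanSpace ℝ (Fin 2) => y 0) x hp0
  have h1 : HasFDerivAt (fun y : EuclideanSpace ℝ (Fin 2) => 1 / (1 + Real.exp (-(y 1))))
      (sgd (x 1) • (EuclideanSpace.proj (1 : Fin 2) : EuclideanSpace ℝ (Fin 2) →L[ℝ] ℝ)) x :=
    (sgd_hasDeriv (x 1)).comp_hasFDerivAt (f := fun y : EuclideanSpace ℝ (Fin 2) => y 1) x hp1
  have hsum := h0.add h1
  rw [hasGradientAt_iff_hasFDerivAt]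
  refine hsum.congr_fderiv ?_
  ext v
  simp [InnerProductSpace.toDual_apply_apply, PiLp.inner_apply, Fin.sum_univ_two,
    mul_comm]

set_option maxHeartbeats 1000000 in
theorem stmt_13 (ε : ℝ) (hε : ε ∈ Set.Ioc (0 : ℝ) 1)
    (x : EuclideanSpace ℝ (Fin 2))
    (hx0 : x 0 ∈ Set.Icc (-10 : ℝ) 10) (hx1 : x 1 ∈ Set.Icc (-10 : ℝ) 10) :
    g13 x - g13 xstar13 ≤ ε ∨
      (gradient g13 x ≠ 0 ∧
        ∀ y ∈ Metric.closedBall xstar13 ε, ⟪gradient g13 x, y - x⟫ ≤ 0) := by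
  obtain ⟨hε0, hε1⟩ := hε
  by_cases hle : g13 x - g13 xstar13 ≤ ε
  · exact Or.inl hle
  · right
    push_neg at hle
    have hgrad : gradient g13 x = (WithLp.equiv 2 (Fin 2 → ℝ)).symm ![sgd (x 0), sgd (x 1)] :=
      (g13_hasGradient x).gradient
    have hgx : g13 x = sg13 (x 0) + sg13 (x 1) := rfl
    have hgs : g13 xstar13 = 2 * sg13 (-10) := by
      show sg13 (xstar13 0) + sg13 (xstar13 1) = _
      have h0 : xstar13 0 = -10 := rfl
      have h1 : xstar13 1 = -10 := rfl
      rw [h0, h1]; ring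
    have hbig : 2 * sg13 (-10) + ε < sg13 (x 0) + sg13 (x 1) := by
      rw [hgx, hgs] at hle; linarith
    constructor
    · intro h
      have h0 : sgd (x 0) = 0 := by
        have := congrArg (fun z : EuclideanSpace ℝ (Fin 2) => z 0) (hgrad.symm.trans h)
        simpa using this
      exact absurd h0 (ne_of_gt (sgd_pos _))
    · intro y hy
      have hdist := Metric.mem_closedBall.mp hy
      have hcoord : ∀ i : Fin 2, |y i + 10| ≤ ε := by
        intro i
        have hxsi : xstar13 i = -10 := by fin_cases i <;> rfl
        have h1 : dist (y i) (xstar13 i) ≤ dist y xstar13 := by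
          rw [EuclideanSpace.dist_eq]
          have h2 : dist (y i) (xstar13 i) = Real.sqrt (dist (y i) (xstar13 i) ^ 2) :=
            (Real.sqrt_sq dist_nonneg).symm
          rw [h2]
          apply Real.sqrt_le_sqrt
          exact Finset.single_le_sum (f := fun j => dist (y j) (xstar13 j) ^ 2)
            (fun j _ => sq_nonneg _) (Finset.mem_univ i)
        rw [Real.dist_eq, hxsi, sub_neg_eq_add] at h1
        linarith
      have hinner : ⟪gradient g13 x, y - x⟫ =
          sgd (x 0) * (y 0 - x 0) + sgd (x 1) * (y 1 - x 1) := by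
        rw [hgrad]
        simp [PiLp.inner_apply, Fin.sum_univ_two, mul_comm]
      rw [hinner]
      rcases le_total (x 1) (x 0) with hor | hor
      · exact core13 ε (x 0) (x 1) (y 0) (y 1) hε0 hε1 hor hx0.1 hx0.2 hx1.1 hbig
          (hcoord 0) (hcoord 1)
      · have := core13 ε (x 1) (x 0) (y 1) (y 0) hε0 hε1 hor hx1.1 hx1.2 hx0.1
          (by linarith) (hcoord 1) (hcoord 0)
        linarith
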